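/- For every n ≥ 1, the number of Catalan words of length n avoiding the pattern pair (=, ≠) equals ∑_{j=0}^{n−1} m_j, the partial sum of Motzkin numbers. -/

import Mathlib

/-- A Catalan word: first letter is 0 and each letter is at most the previous plus one. -/
def IsCatalanWord (w : List ℕ) : Prop :=
  (0 < w.length → w.getD 0 0 = 0) ∧
  ∀ i, i + 1 < w.length → w.getD (i + 1) 0 ≤ w.getD i 0 + 1

/-- `w` avoids the consecutive pattern pair `(X, Y)`. -/
def AvoidsPair (X Y : ℕ → ℕ → Prop) (w : List ℕ) : Prop :=
  ∀ i, i + 2 < w.length →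
    ¬ (X (w.getD i 0) (w.getD (i + 1) 0) ∧ Y (w.getD (i + 1) 0) (w.getD (i + 2) 0))

/-- Number of descents of `w`. -/
def descents (w : List ℕ) : ℕ :=
  ((Finset.range (w.length - 1)).filter (fun i => w.getD (i + 1) 0 < w.getD i 0)).card

/-- Catalan words of length `n` avoiding `(X,Y)`. -/
def CW (n : ℕ) (X Y : ℕ → ℕ → Prop) : Set (List ℕ) :=
  {w | w.length = n ∧ IsCatalanWord w ∧ AvoidsPair X Y w}

/-- Motzkin numbers via the binomial-Catalan formula. -/
def motzkin (n : ℕ) : ℕ :=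
  ∑ k ∈ Finset.range (n / 2 + 1), n.choose (2 * k) * catalan k

open Finset


lemma motzkin_ext (n N : ℕ) (hN : n / 2 + 1 ≤ N) :
    motzkin n = ∑ k ∈ Finset.range N, n.choose (2 * k) * catalan k := by
  unfold motzkin
  refine Finset.sum_subset (by simpa using Finset.range_subset_range.2 hN) ?_
  intro k _ hk
  simp only [mem_range, not_lt] at hk
  rw [Nat.choose_eq_zero_of_lt (by omega), zero_mul]

lemma vand (b : ℕ) : ∀ a m : ℕ,
    ∑ k ∈ range (m+1), k.choose a * (m-k).choose b = (m+1).choose (a+b+1) := by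
  induction b with
  | zero =>
    intro a m
    simp only [Nat.choose_zero_right, mul_one, add_zero]
    rw [← Nat.sum_Icc_choose m a]
    refine (Finset.sum_subset ?_ ?_).symm
    · intro k hk; simp only [mem_Icc] at hk; simp only [mem_range]; omega
    · intro k hk h
      have hka : k < a := by
        simp only [mem_Icc, not_and, not_le] at h
        simp only [mem_range] at hk
        omega
      exact Nat.choose_eq_zero_of_lt hka
  | succ b ih =>
    intro a m
    induction m with
    | zero =>
      simp [Nat.choose_eq_zero_of_lt (show 0 < b+1 by omega),
        Nat.choose_eq_zero_of_lt (show 1 < a+(b+1)+1 by omega)]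
    | succ m ihm =>
      rw [Finset.sum_range_succ]
      have h1 : ∀ k ∈ range (m+1), k.choose a * (m+1-k).choose (b+1)
          = k.choose a * (m-k).choose b + k.choose a * (m-k).choose (b+1) := by
        intro k hk
        simp only [mem_range] at hk
        have : m + 1 - k = (m - k) + 1 := by omega
        rw [this, Nat.choose_succ_succ, Nat.mul_add]
      rw [Finset.sum_congr rfl h1, Finset.sum_add_distrib, ih a m, ihm]
      have : (m+1+1).choose (a+(b+1)+1) = (m+1).choose (a+b+1) + (m+1).choose (a+(b+1)+1) := by
        have := Nat.choose_succ_succ (m+1) (a+(b+1)); 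
        simpa [Nat.add_assoc, Nat.add_comm, Nat.add_left_comm] using this
      rw [this]
      simp [Nat.choose_eq_zero_of_lt (show 0 < b+1 by omega)]

lemma motzkin_zero : motzkin 0 = 1 := by simp [motzkin]
lemma motzkin_one : motzkin 1 = 1 := by simp [motzkin]

lemma catalan_succ'' (n : ℕ) :
    catalan (n + 1) = ∑ i ∈ range (n + 1), catalan i * catalan (n - i) := by
  rw [catalan_succ']
  exact Finset.Nat.sum_antidiagonal_eq_sum_range_succ_mk _ n

lemma motzkin_succ_succ (m : ℕ) :
    motzkin (m + 2) = motzkin (m + 1) + ∑ k ∈ range (m + 1), motzkin k * motzkin (m - k) := by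
  have hS : ∑ k ∈ range (m + 1), motzkin k * motzkin (m - k)
      = ∑ a ∈ range (m+3), ∑ b ∈ range (m+3),
          catalan a * catalan b * (m+1).choose (2*(a+b)+1) := by
    have step1 : ∑ k ∈ range (m + 1), motzkin k * motzkin (m - k)
        = ∑ k ∈ range (m+1), ∑ a ∈ range (m+3), ∑ b ∈ range (m+3),
            (k.choose (2*a) * catalan a) * ((m-k).choose (2*b) * catalan b) := by
      refine Finset.sum_congr rfl fun k hk => ?_
      simp only [mem_range] at hk
      rw [motzkin_ext k (m+3) (by omega), motzkin_ext (m-k) (m+3) (by omega),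
        Finset.sum_mul_sum]
    rw [step1, Finset.sum_comm]
    refine Finset.sum_congr rfl fun a _ => ?_
    rw [Finset.sum_comm]
    refine Finset.sum_congr rfl fun b _ => ?_
    have hv := vand (2*b) (2*a) m
    calc ∑ k ∈ range (m+1), (k.choose (2*a) * catalan a) * ((m-k).choose (2*b) * catalan b)
        = catalan a * catalan b * ∑ k ∈ range (m+1), k.choose (2*a) * (m-k).choose (2*b) := by
          rw [Finset.mul_sum]; exact Finset.sum_congr rfl fun k _ => by ring
      _ = catalan a * catalan b * (m+1).choose (2*(a+b)+1) := by
          rw [hv]; ring_nf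
  have hT : ∑ a ∈ range (m+3), ∑ b ∈ range (m+3),
        catalan a * catalan b * (m+1).choose (2*(a+b)+1)
      = ∑ j ∈ range (m+3), (m+1).choose (2*j+1) * catalan (j+1) := by
    have rhs : ∑ j ∈ range (m+3), (m+1).choose (2*j+1) * catalan (j+1)
        = ∑ p ∈ (range (m+3)).sigma (fun j => range (j+1)),
            (m+1).choose (2*p.1+1) * (catalan p.2 * catalan (p.1 - p.2)) := by
      rw [Finset.sum_sigma]
      refine Finset.sum_congr rfl fun j _ => ?_
      rw [catalan_succ'' j, Finset.mul_sum]
    have lhs : ∑ a ∈ range (m+3), ∑ b ∈ range (m+3),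
          catalan a * catalan b * (m+1).choose (2*(a+b)+1)
        = ∑ p ∈ ((range (m+3)) ×ˢ (range (m+3))).filter (fun p => p.1 + p.2 < m+3),
            catalan p.1 * catalan p.2 * (m+1).choose (2*(p.1+p.2)+1) := by
      rw [← Finset.sum_product']
      refine (Finset.sum_subset (Finset.filter_subset _ _) ?_).symm
      intro p hp0 hp
      simp only [Finset.mem_filter, not_and, not_lt] at hp
      have h1 := hp hp0
      rw [Nat.choose_eq_zero_of_lt (by omega), mul_zero]
    rw [lhs, rhs]
    refine Finset.sum_bij' (fun p _ => (⟨p.1 + p.2, p.1⟩ : Σ _ : ℕ, ℕ))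
      (fun q _ => ((q.2, q.1 - q.2) : ℕ × ℕ)) ?_ ?_ ?_ ?_ ?_
    · intro p hp
      simp only [Finset.mem_filter, Finset.mem_product, mem_range] at hp
      simp only [Finset.mem_sigma, mem_range]
      omega
    · intro q hq
      simp only [Finset.mem_sigma, mem_range] at hq
      simp only [Finset.mem_filter, Finset.mem_product, mem_range]
      omega
    · intro p hp
      simp only [Finset.mem_filter, Finset.mem_product, mem_range] at hp
      simp
    · intro q hq
      obtain ⟨j, i⟩ := q
      simp only [Finset.mem_sigma, mem_range] at hq
      have hj : i + (j - i) = j := by omega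
      dsimp only
      rw [hj]
    · intro p hp
      simp only [Finset.mem_filter, Finset.mem_product, mem_range] at hp
      have : p.1 + p.2 - p.1 = p.2 := by omega
      rw [this]; ring
  rw [hS, hT]
  have e1 : motzkin (m+2) = ∑ j ∈ range (m+3), (m+2).choose (2*j) * catalan j :=
    motzkin_ext _ _ (by omega)
  have e2 : motzkin (m+1) = ∑ j ∈ range (m+3), (m+1).choose (2*j) * catalan j :=
    motzkin_ext _ _ (by omega)
  rw [e1, e2]
  rw [Finset.sum_range_succ' (fun j => (m+2).choose (2*j) * catalan j) (m+2)]
  rw [Finset.sum_range_succ' (fun j => (m+1).choose (2*j) * catalan j) (m+2)]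
  have pascal : ∀ j, (m+2).choose (2*(j+1)) = (m+1).choose (2*j+1) + (m+1).choose (2*(j+1)) := by
    intro j
    rw [show 2*(j+1) = (2*j+1)+1 by ring]
    simpa [Nat.mul_add] using Nat.choose_succ_succ (m+1) (2*j+1)
  have split : ∑ j ∈ range (m+2), (m+2).choose (2*(j+1)) * catalan (j+1)
      = ∑ j ∈ range (m+2), (m+1).choose (2*j+1) * catalan (j+1)
        + ∑ j ∈ range (m+2), (m+1).choose (2*(j+1)) * catalan (j+1) := by
    rw [← Finset.sum_add_distrib]
    refine Finset.sum_congr rfl fun j _ => ?_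
    rw [pascal j, Nat.add_mul]
  have ext1 : ∑ j ∈ range (m+3), (m+1).choose (2*j+1) * catalan (j+1)
      = ∑ j ∈ range (m+2), (m+1).choose (2*j+1) * catalan (j+1) := by
    rw [Finset.sum_range_succ, Nat.choose_eq_zero_of_lt (by omega), zero_mul, add_zero]
  rw [split, ext1]
  simp [Nat.choose_zero_right, catalan_zero]
  ring


/-- strict Catalan words (no two adjacent equal letters) -/
def SW (m : ℕ) : Set (List ℕ) :=
  {w | w.length = m ∧ IsCatalanWord w ∧
    ∀ i, i + 1 < w.length → w.getD (i + 1) 0 ≠ w.getD i 0}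

-- basic getD lemmas
lemma getD_map_add (v : List ℕ) (i : ℕ) (h : i < v.length) :
    (v.map (· + 1)).getD i 0 = v.getD i 0 + 1 := by
  rw [List.getD_eq_getElem _ _ (by simpa using h), List.getD_eq_getElem _ _ h,
    List.getElem_map]

lemma getD_map_sub (v : List ℕ) (i : ℕ) (h : i < v.length) :
    (v.map (· - 1)).getD i 0 = v.getD i 0 - 1 := by
  rw [List.getD_eq_getElem _ _ (by simpa using h), List.getD_eq_getElem _ _ h,
    List.getElem_map]

lemma getD_take' (v : List ℕ) (j i : ℕ) (h : i < j) (h2 : j ≤ v.length) :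
    (v.take j).getD i 0 = v.getD i 0 := by
  rw [List.getD_eq_getElem _ _ (by simp; omega), List.getD_eq_getElem _ _ (by omega),
    List.getElem_take]

lemma getD_drop' (v : List ℕ) (j i : ℕ) (h : j + i < v.length) :
    (v.drop j).getD i 0 = v.getD (j + i) 0 := by
  rw [List.getD_eq_getElem _ _ (by simp; omega), List.getD_eq_getElem _ _ h]
  simp [List.getElem_drop]

lemma getD_replicate (r c i : ℕ) (h : i < r) :
    (List.replicate r c).getD i 0 = c := by
  rw [List.getD_eq_getElem _ _ (by simpa using h)]
  simp

-- finiteness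
lemma finite_bdd (n : ℕ) : {w : List ℕ | w.length = n ∧ ∀ x ∈ w, x < n}.Finite := by
  have h : {w : List ℕ | w.length = n ∧ ∀ x ∈ w, x < n}
      ⊆ (List.map (Fin.val : Fin n → ℕ)) '' {l : List (Fin n) | l.length = n} := by
    rintro w ⟨hlen, hmem⟩
    refine ⟨w.pmap (fun x h => (⟨x, h⟩ : Fin n)) hmem, by simp [hlen], ?_⟩
    simp [List.map_pmap]
  exact Set.Finite.subset ((List.finite_length_eq (Fin n) n).image _) h

lemma catalan_word_bdd {w : List ℕ} (hw : IsCatalanWord w) :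
    ∀ i, i < w.length → w.getD i 0 ≤ i := by
  intro i
  induction i with
  | zero => intro h; have := hw.1 h; omega
  | succ i ih =>
    intro h
    have := hw.2 i h
    have := ih (by omega)
    omega

lemma SW_finite (m : ℕ) : (SW m).Finite := by
  refine Set.Finite.subset (finite_bdd m) ?_
  rintro w ⟨hlen, hcat, _⟩
  refine ⟨hlen, fun x hx => ?_⟩
  obtain ⟨i, hi, rfl⟩ := List.getElem_of_mem hx
  have := catalan_word_bdd hcat i (by omega)
  rw [List.getD_eq_getElem _ _ (by omega)] at this
  omega

lemma CW_finite (n : ℕ) (X Y : ℕ → ℕ → Prop) : (CW n X Y).Finite := by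
  refine Set.Finite.subset (finite_bdd n) ?_
  rintro w ⟨hlen, hcat, _⟩
  refine ⟨hlen, fun x hx => ?_⟩
  obtain ⟨i, hi, rfl⟩ := List.getElem_of_mem hx
  have := catalan_word_bdd hcat i (by omega)
  rw [List.getD_eq_getElem _ _ (by omega)] at this
  omega

-- counting helpers
lemma ncard_biUnion {ι α : Type} [DecidableEq ι] (s : Finset ι) (f : ι → Set α)
    (hfin : ∀ i ∈ s, (f i).Finite)
    (hdisj : ∀ i ∈ s, ∀ j ∈ s, i ≠ j → Disjoint (f i) (f j)) :
    (⋃ i ∈ s, f i).ncard = ∑ i ∈ s, (f i).ncard := by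
  induction s using Finset.induction with
  | empty => simp
  | @insert a s ha ih =>
    rw [Finset.sum_insert ha]
    have hU : (⋃ i ∈ insert a s, f i) = f a ∪ ⋃ i ∈ s, f i := by
      simp [Set.biUnion_insert]
    have hd : Disjoint (f a) (⋃ i ∈ s, f i) := by
      rw [Set.disjoint_iUnion₂_right]
      intro i hi
      exact hdisj a (Finset.mem_insert_self a s) i (Finset.mem_insert_of_mem hi)
        (fun h => ha (h ▸ hi))
    have hf1 : (f a).Finite := hfin a (Finset.mem_insert_self a s)
    have hf2 : (⋃ i ∈ s, f i).Finite :=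
      Set.Finite.biUnion (s.finite_toSet) (fun i hi => hfin i (Finset.mem_insert_of_mem hi))
    rw [hU, Set.ncard_union_eq hd hf1 hf2, ih (fun i hi => hfin i (Finset.mem_insert_of_mem hi))
      (fun i hi j hj hij => hdisj i (Finset.mem_insert_of_mem hi) j
        (Finset.mem_insert_of_mem hj) hij)]

lemma ncard_prod {α β : Type*} (A : Set α) (B : Set β) :
    (A ×ˢ B).ncard = A.ncard * B.ncard := by
  rw [← Nat.card_coe_set_eq, ← Nat.card_coe_set_eq, ← Nat.card_coe_set_eq,
    ← Nat.card_prod]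
  exact Nat.card_congr (Equiv.Set.prod A B)

lemma SW_one : SW 1 = {[0]} := by
  ext w
  constructor
  · rintro ⟨hlen, hcat, _⟩
    obtain ⟨a, rfl⟩ := List.length_eq_one_iff.1 hlen
    have := hcat.1 (by simp)
    simp at this
    simp [this]
  · rintro rfl
    refine ⟨rfl, ⟨by simp, ?_⟩, ?_⟩ <;> (intro i hi; simp at hi)

lemma SW_two : SW 2 = {[0, 1]} := by
  ext w
  constructor
  · rintro ⟨hlen, hcat, hs⟩
    obtain ⟨a, b, rfl⟩ := List.length_eq_two.1 hlen
    have h0 := hcat.1 (by simp)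
    have h1 := hcat.2 0 (by simp)
    have h2 := hs 0 (by simp)
    simp at h0 h1 h2
    simp [h0] at h1 h2 ⊢
    omega
  · rintro rfl
    refine ⟨rfl, ⟨by simp, ?_⟩, ?_⟩
    · intro i hi
      simp only [List.length_cons, List.length_nil] at hi
      have h : i = 0 := by omega
      subst h
      decide
    · intro i hi
      simp only [List.length_cons, List.length_nil] at hi
      have h : i = 0 := by omega
      subst h
      decide

lemma ncard_SW_one : (SW 1).ncard = 1 := by rw [SW_one]; simp
lemma ncard_SW_two : (SW 2).ncard = 1 := by rw [SW_two]; simp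

-- glue map getD computations
lemma glue_getD_lo (u x : List ℕ) (i : ℕ) (h : i < u.length) :
    (0 :: (u.map (· + 1) ++ x)).getD (i + 1) 0 = u.getD i 0 + 1 := by
  rw [List.getD_cons_succ, List.getD_append _ _ _ _ (by simpa using h), getD_map_add _ _ h]

lemma glue_getD_hi (u x : List ℕ) (i : ℕ) (h : u.length ≤ i) :
    (0 :: (u.map (· + 1) ++ x)).getD (i + 1) 0 = x.getD (i - u.length) 0 := by
  rw [List.getD_cons_succ, List.getD_append_right _ _ _ _ (by simpa using h)]
  simp

lemma cons_getD_succ (v : List ℕ) (i : ℕ) (h : i < v.length) :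
    (0 :: v.map (· + 1)).getD (i + 1) 0 = v.getD i 0 + 1 := by
  rw [List.getD_cons_succ, getD_map_add _ _ h]

lemma consMap_mem {n : ℕ} {v : List ℕ} (hv : v ∈ SW (n + 1)) :
    (0 :: v.map (· + 1)) ∈ SW (n + 2) := by
  obtain ⟨hl, ⟨hh, hc⟩, hs⟩ := hv
  have hlen : (0 :: v.map (· + 1)).length = n + 2 := by simp [hl]
  refine ⟨hlen, ⟨fun _ => rfl, ?_⟩, ?_⟩
  · intro i hi
    rw [hlen] at hi
    rcases i with _ | j
    · rw [cons_getD_succ v 0 (by omega)]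
      have h0 := hh (by omega)
      simp only [List.getD_cons_zero]
      omega
    · rw [cons_getD_succ v (j+1) (by omega), cons_getD_succ v j (by omega)]
      have := hc j (by omega)
      omega
  · intro i hi
    rw [hlen] at hi
    rcases i with _ | j
    · rw [cons_getD_succ v 0 (by omega)]
      simp only [List.getD_cons_zero]
      omega
    · rw [cons_getD_succ v (j+1) (by omega), cons_getD_succ v j (by omega)]
      have := hs j (by omega)
      omega

lemma glue_mem {k l : ℕ} (hk : 1 ≤ k) (hl : 1 ≤ l) {u x : List ℕ}
    (hu : u ∈ SW k) (hx : x ∈ SW l) :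
    (0 :: (u.map (· + 1) ++ x)) ∈ SW (k + l + 1) := by
  obtain ⟨hul, ⟨huh, huc⟩, hus⟩ := hu
  obtain ⟨hxl, ⟨hxh, hxc⟩, hxs⟩ := hx
  have hlen : (0 :: (u.map (· + 1) ++ x)).length = k + l + 1 := by
    simp only [List.length_cons, List.length_append, List.length_map, hul, hxl]
  have hx0 : x.getD 0 0 = 0 := hxh (by omega)
  refine ⟨hlen, ⟨fun _ => rfl, ?_⟩, ?_⟩
  · intro i hi
    rw [hlen] at hi
    rcases i with _ | j
    · rw [glue_getD_lo u x 0 (by omega)]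
      have h0 := huh (by omega)
      simp only [List.getD_cons_zero]
      omega
    · rcases Nat.lt_or_ge (j + 1) k with h | h
      · rw [glue_getD_lo u x (j+1) (by omega), glue_getD_lo u x j (by omega)]
        have := huc j (by omega)
        omega
      · rcases Nat.lt_or_ge j k with h2 | h2
        · -- j + 1 = k : boundary
          rw [glue_getD_hi u x (j+1) (by omega)]
          have : j + 1 - u.length = 0 := by omega
          rw [this, hx0]
          omega
        · rw [glue_getD_hi u x (j+1) (by omega), glue_getD_hi u x j (by omega)]
          have he : j + 1 - u.length = (j - u.length) + 1 := by omega
          rw [he]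
          have := hxc (j - u.length) (by omega)
          omega
  · intro i hi
    rw [hlen] at hi
    rcases i with _ | j
    · rw [glue_getD_lo u x 0 (by omega)]
      simp only [List.getD_cons_zero]
      omega
    · rcases Nat.lt_or_ge (j + 1) k with h | h
      · rw [glue_getD_lo u x (j+1) (by omega), glue_getD_lo u x j (by omega)]
        have := hus j (by omega)
        omega
      · rcases Nat.lt_or_ge j k with h2 | h2
        · rw [glue_getD_hi u x (j+1) (by omega), glue_getD_lo u x j (by omega)]
          have : j + 1 - u.length = 0 := by omega
          rw [this, hx0]
          omega
        · rw [glue_getD_hi u x (j+1) (by omega), glue_getD_hi u x j (by omega)]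
          have he : j + 1 - u.length = (j - u.length) + 1 := by omega
          rw [he]
          have := hxs (j - u.length) (by omega)
          omega

lemma map_sub_add {t : List ℕ} (h : ∀ x ∈ t, x ≠ 0) :
    (t.map (· - 1)).map (· + 1) = t := by
  rw [List.map_map]
  have : t.map ((· + 1) ∘ (· - 1)) = t.map id :=
    List.map_congr_left (fun x hx => by have := h x hx; simp; omega)
  rw [this, List.map_id]

lemma SW_decomp (n : ℕ) :
    SW (n + 2) = (fun v => 0 :: v.map (· + 1)) '' SW (n + 1)
      ∪ ⋃ k ∈ Finset.Icc 1 n,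
          (fun p : List ℕ × List ℕ => 0 :: (p.1.map (· + 1) ++ p.2)) ''
            (SW k ×ˢ SW (n + 1 - k)) := by
  ext w
  constructor
  · rintro ⟨hlen, ⟨hh, hc⟩, hs⟩
    obtain ⟨a, t, rfl⟩ : ∃ a t, w = a :: t := by
      cases w with
      | nil => simp at hlen
      | cons a t => exact ⟨a, t, rfl⟩
    have ha : a = 0 := by simpa using hh (by simp)
    subst ha
    have htlen : t.length = n + 1 := by simpa using hlen
    have ht0 : t.getD 0 0 = 1 := by
      have h1 := hc 0 (by simp [htlen])
      have h2 := hs 0 (by simp [htlen])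
      simp only [List.getD_cons_succ, List.getD_cons_zero] at h1 h2
      omega
    have hstep : ∀ i, i + 1 < t.length →
        t.getD (i + 1) 0 ≤ t.getD i 0 + 1 ∧ t.getD (i + 1) 0 ≠ t.getD i 0 := by
      intro i hi
      constructor
      · have := hc (i + 1) (by simp; omega)
        simpa using this
      · have := hs (i + 1) (by simp; omega)
        simpa using this
    by_cases hz : ∀ i, i < t.length → t.getD i 0 ≠ 0
    · left
      have hmem : ∀ x ∈ t, x ≠ 0 := by
        intro x hx
        obtain ⟨i, hi, rfl⟩ := List.getElem_of_mem hx
        rw [← List.getD_eq_getElem t 0 hi]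
        exact hz i hi
      refine ⟨t.map (· - 1), ⟨by simp [htlen], ⟨?_, ?_⟩, ?_⟩, ?_⟩
      · intro h
        rw [getD_map_sub t 0 (by omega)]
        omega
      · intro i hi
        simp only [List.length_map] at hi
        rw [getD_map_sub t (i+1) (by omega), getD_map_sub t i (by omega)]
        have h1 := (hstep i (by omega)).1
        have h2 := hz i (by omega)
        have h3 := hz (i+1) (by omega)
        omega
      · intro i hi
        simp only [List.length_map] at hi
        rw [getD_map_sub t (i+1) (by omega), getD_map_sub t i (by omega)]
        have h1 := (hstep i (by omega)).2
        have h2 := hz i (by omega)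
        have h3 := hz (i+1) (by omega)
        omega
      · simp only
        rw [map_sub_add hmem]
    · right
      push_neg at hz
      have hP : ∃ i, i < t.length ∧ t.getD i 0 = 0 := by
        obtain ⟨i, hi, h⟩ := hz
        exact ⟨i, hi, h⟩
      classical
      obtain ⟨j, hjlt, hj0, hmin⟩ :
          ∃ j, j < t.length ∧ t.getD j 0 = 0 ∧ ∀ i, i < j → t.getD i 0 ≠ 0 := by
        refine ⟨Nat.find hP, (Nat.find_spec hP).1, (Nat.find_spec hP).2, ?_⟩
        intro i hij hi0
        exact Nat.find_min hP hij ⟨by have := (Nat.find_spec hP).1; omega, hi0⟩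
      have hj1 : 1 ≤ j := by
        rcases Nat.eq_zero_or_pos j with h | h
        · rw [h] at hj0; omega
        · exact h
      have hjn : j ≤ n := by omega
      refine Set.mem_iUnion₂.2 ⟨j, Finset.mem_Icc.2 ⟨hj1, hjn⟩, ?_⟩
      have htake : ∀ i, i < j → (t.take j).getD i 0 = t.getD i 0 :=
        fun i hi => getD_take' t j i hi (by omega)
      have htakemem : ∀ x ∈ t.take j, x ≠ 0 := by
        intro x hx
        obtain ⟨i, hi, rfl⟩ := List.getElem_of_mem hx
        have hi' : i < j := by simp only [List.length_take] at hi; omega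
        have heq : (t.take j)[i] = (t.take j).getD i 0 :=
          (List.getD_eq_getElem _ 0 hi).symm
        rw [heq, getD_take' t j i hi' (by omega)]
        exact hmin i hi'
      refine ⟨((t.take j).map (· - 1), t.drop j), ⟨?_, ?_⟩, ?_⟩
      · -- take part in SW j
        refine ⟨by simp [htlen]; omega, ⟨?_, ?_⟩, ?_⟩
        · intro h
          rw [getD_map_sub _ 0 (by simp [htlen]; omega), htake 0 (by omega), ht0]
        · intro i hi
          simp only [List.length_map, List.length_take] at hi
          rw [getD_map_sub _ (i+1) (by simp [htlen]; omega),
            getD_map_sub _ i (by simp [htlen]; omega),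
            htake (i+1) (by omega), htake i (by omega)]
          have h1 := (hstep i (by omega)).1
          have h2 := hmin i (by omega)
          have h3 := hmin (i+1) (by omega)
          omega
        · intro i hi
          simp only [List.length_map, List.length_take] at hi
          rw [getD_map_sub _ (i+1) (by simp [htlen]; omega),
            getD_map_sub _ i (by simp [htlen]; omega),
            htake (i+1) (by omega), htake i (by omega)]
          have h1 := (hstep i (by omega)).2
          have h2 := hmin i (by omega)
          have h3 := hmin (i+1) (by omega)
          omega
      · -- drop part in SW (n+1-j)
        refine ⟨by simp [htlen], ⟨?_, ?_⟩, ?_⟩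
        · intro h
          rw [getD_drop' t j 0 (by omega)]
          simpa using hj0
        · intro i hi
          simp only [List.length_drop] at hi
          rw [getD_drop' t j (i+1) (by omega), getD_drop' t j i (by omega)]
          have h1 := (hstep (j + i) (by omega)).1
          have he : j + (i + 1) = (j + i) + 1 := by omega
          rw [he]
          omega
        · intro i hi
          simp only [List.length_drop] at hi
          rw [getD_drop' t j (i+1) (by omega), getD_drop' t j i (by omega)]
          have h1 := (hstep (j + i) (by omega)).2
          have he : j + (i + 1) = (j + i) + 1 := by omega
          rw [he]
          omega
      · simp only
        rw [map_sub_add htakemem, List.take_append_drop]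
  · intro hw
    rcases hw with ⟨v, hv, rfl⟩ | hw
    · exact consMap_mem hv
    · obtain ⟨k, hk, p, hp, rfl⟩ := Set.mem_iUnion₂.1 (by exact hw)
      obtain ⟨hk1, hkn⟩ := Finset.mem_Icc.1 hk
      obtain ⟨hp1, hp2⟩ := hp
      have := glue_mem (k := k) (l := n + 1 - k) hk1 (by omega) hp1 hp2
      have he : k + (n + 1 - k) + 1 = n + 2 := by omega
      rw [he] at this
      exact this

lemma glue_discr {k l : ℕ} (hl : 1 ≤ l) {u x : List ℕ} (hu : u.length = k)
    (hx : x ∈ SW l) :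
    (∀ i, i < k → (0 :: (u.map (· + 1) ++ x)).getD (i + 1) 0 ≠ 0) ∧
    (0 :: (u.map (· + 1) ++ x)).getD (k + 1) 0 = 0 := by
  obtain ⟨hxl, ⟨hxh, _⟩, _⟩ := hx
  constructor
  · intro i hi
    rw [glue_getD_lo u x i (by omega)]
    omega
  · rw [glue_getD_hi u x k (by omega)]
    have : k - u.length = 0 := by omega
    rw [this]
    exact hxh (by omega)

lemma SW_card_rec (n : ℕ) :
    (SW (n + 2)).ncard
      = (SW (n + 1)).ncard + ∑ k ∈ Finset.Icc 1 n, (SW k).ncard * (SW (n + 1 - k)).ncard := by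
  classical
  rw [SW_decomp n]
  have hInjCons : Function.Injective (fun v : List ℕ => 0 :: v.map (· + 1)) := by
    intro a b h
    simp only [List.cons.injEq, true_and] at h
    exact List.map_injective_iff.2 (fun x y hxy => by omega) h
  have hzero_mem : ∀ (l : ℕ) (x : List ℕ), 1 ≤ l → x ∈ SW l → (0 : ℕ) ∈ x := by
    intro l x hl hx
    obtain ⟨hxl, ⟨hxh, _⟩, _⟩ := hx
    have h0 : x.getD 0 0 = 0 := hxh (by omega)
    have h0' : x[0]'(by omega) = (0 : ℕ) := by
      rw [← List.getD_eq_getElem x 0 (by omega)]; exact h0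
    rw [← h0']
    exact List.getElem_mem _
  -- disjointness of the two parts
  have hdisj : Disjoint ((fun v => 0 :: v.map (· + 1)) '' SW (n + 1))
      (⋃ k ∈ Finset.Icc 1 n,
        (fun p : List ℕ × List ℕ => 0 :: (p.1.map (· + 1) ++ p.2)) ''
          (SW k ×ˢ SW (n + 1 - k))) := by
    rw [Set.disjoint_left]
    rintro w ⟨v, hv, rfl⟩ hw
    obtain ⟨k, hk, p, hp, heq⟩ := Set.mem_iUnion₂.1 hw
    obtain ⟨hk1, hkn⟩ := Finset.mem_Icc.1 hk
    have h0x : (0 : ℕ) ∈ p.2 := hzero_mem (n + 1 - k) p.2 (by omega) hp.2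
    have htail : p.1.map (· + 1) ++ p.2 = v.map (· + 1) := by
      have := heq
      simp only [List.cons.injEq, true_and] at this
      exact this
    have : (0 : ℕ) ∈ v.map (· + 1) := by
      rw [← htail]
      exact List.mem_append.2 (Or.inr h0x)
    simp only [List.mem_map] at this
    obtain ⟨y, _, hy⟩ := this
    omega
  have hfin1 : ((fun v => 0 :: v.map (· + 1)) '' SW (n + 1)).Finite :=
    (SW_finite (n + 1)).image _
  have hfin2 : (⋃ k ∈ Finset.Icc 1 n,
      (fun p : List ℕ × List ℕ => 0 :: (p.1.map (· + 1) ++ p.2)) ''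
        (SW k ×ˢ SW (n + 1 - k))).Finite :=
    Set.Finite.biUnion (Finset.Icc 1 n).finite_toSet
      (fun k _ => (((SW_finite k).prod (SW_finite (n + 1 - k))).image _))
  rw [Set.ncard_union_eq hdisj hfin1 hfin2]
  congr 1
  · exact Set.ncard_image_of_injective _ hInjCons
  · rw [ncard_biUnion (Finset.Icc 1 n) _
      (fun k _ => ((SW_finite k).prod (SW_finite (n + 1 - k))).image _) ?_]
    · refine Finset.sum_congr rfl fun k hk => ?_
      obtain ⟨hk1, hkn⟩ := Finset.mem_Icc.1 hk
      rw [← ncard_prod]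
      refine Set.ncard_image_of_injOn ?_
      rintro ⟨u1, x1⟩ ⟨hu1, hx1⟩ ⟨u2, x2⟩ ⟨hu2, hx2⟩ heq
      simp only [List.cons.injEq, true_and] at heq
      have hlen : (u1.map (· + 1)).length = (u2.map (· + 1)).length := by
        simp [hu1.1, hu2.1]
      obtain ⟨h1, h2⟩ := List.append_inj heq hlen
      have : u1 = u2 := List.map_injective_iff.2 (fun x y hxy => by omega) h1
      simp [this, h2]
    · intro i hi j hj hij
      obtain ⟨hi1, hin⟩ := Finset.mem_Icc.1 hi
      obtain ⟨hj1, hjn⟩ := Finset.mem_Icc.1 hj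
      rw [Set.disjoint_left]
      rintro w ⟨⟨u1, x1⟩, ⟨hu1, hx1⟩, rfl⟩ ⟨⟨u2, x2⟩, ⟨hu2, hx2⟩, heq⟩
      have d1 := glue_discr (k := i) (l := n + 1 - i) (by omega) hu1.1 hx1
      have d2 := glue_discr (k := j) (l := n + 1 - j) (by omega) hu2.1 hx2
      dsimp only at heq d1 d2
      rw [heq] at d2
      rcases Nat.lt_or_ge i j with h | h
      · exact (d2.1 i h) d1.2
      · have hlt : j < i := by omega
        exact (d1.1 j hlt) d2.2

-- appended part (with context from d.lean via concatenation below)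
lemma SW_card_motzkin (m : ℕ) : (SW (m + 1)).ncard = motzkin m := by
  induction m using Nat.strong_induction_on with
  | _ m ih =>
    match m with
    | 0 => rw [show (0:ℕ) + 1 = 1 from rfl, ncard_SW_one, motzkin_zero]
    | 1 => rw [show (1:ℕ) + 1 = 2 from rfl, ncard_SW_two, motzkin_one]
    | (r + 2) =>
      have hrec := SW_card_rec (r + 1)
      have hgoal : r + 2 + 1 = r + 1 + 2 := by ring
      rw [hgoal, hrec, motzkin_succ_succ r, ih (r + 1) (by omega)]
      congr 1
      rw [show Finset.Icc 1 (r + 1) = Finset.Ico 1 (r + 2) by rw [← Finset.Ico_add_one_right_eq_Icc]; rfl,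
        Finset.sum_Ico_eq_sum_range]
      refine Finset.sum_congr (by norm_num) fun k hk => ?_
      simp only [Finset.mem_range] at hk
      have h1 : 1 + k = k + 1 := by ring
      have h2 : r + 1 + 1 - (k + 1) = (r - k) + 1 := by omega
      rw [h1, h2, ih k (by omega), ih (r - k) (by omega)]


-- getD of padded word
lemma pad_getD_lo (v : List ℕ) (r c i : ℕ) (h : i < v.length) :
    (v ++ List.replicate r c).getD i 0 = v.getD i 0 :=
  List.getD_append _ _ _ _ h

lemma pad_getD_hi (v : List ℕ) (r c i : ℕ) (h : v.length ≤ i) (h2 : i < v.length + r) :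
    (v ++ List.replicate r c).getD i 0 = c := by
  rw [List.getD_append_right _ _ _ _ h, getD_replicate r c _ (by omega)]

lemma CW_decomp (n : ℕ) (hn : 1 ≤ n) :
    CW n (· = ·) (· ≠ ·)
      = ⋃ m ∈ Finset.Icc 1 n,
          (fun v => v ++ List.replicate (n - m) (v.getD (m - 1) 0)) '' SW m := by
  ext w
  constructor
  · rintro ⟨hlen, ⟨hh, hc⟩, hav⟩
    classical
    by_cases hex : ∃ i, i + 1 < n ∧ w.getD (i + 1) 0 = w.getD i 0
    · obtain ⟨j, ⟨hj1, hj2⟩, hjmin⟩ :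
          ∃ j, (j + 1 < n ∧ w.getD (j + 1) 0 = w.getD j 0) ∧
            ∀ i, i < j → w.getD (i + 1) 0 ≠ w.getD i 0 := by
        have hspec := Nat.find_spec hex
        have hs1 := hspec.1
        refine ⟨Nat.find hex, hspec, ?_⟩
        intro i hij hi0
        exact Nat.find_min hex hij ⟨by omega, hi0⟩
      -- constancy from j on
      have hconst : ∀ i, j ≤ i → i < n → w.getD i 0 = w.getD j 0 := by
        have hR : ∀ i, j ≤ i → i + 1 < n → w.getD (i + 1) 0 = w.getD i 0 := by
          intro i hi
          induction i, hi using Nat.le_induction with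
          | base => intro _; exact hj2
          | succ i hji ihi =>
            intro hi1
            have h1 : w.getD (i + 1) 0 = w.getD i 0 := ihi (by omega)
            have h2 := hav i (by omega)
            simp only [not_and, not_not] at h2
            exact (h2 h1.symm).symm
        intro i hi
        induction i, hi using Nat.le_induction with
        | base => intro _; rfl
        | succ i hji ihi =>
          intro hi1
          rw [hR i hji (by omega), ihi (by omega)]
      refine Set.mem_iUnion₂.2 ⟨j + 1, Finset.mem_Icc.2 ⟨by omega, by omega⟩,
        w.take (j + 1), ⟨?_, ⟨?_, ?_⟩, ?_⟩, ?_⟩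
      · simp [hlen]; omega
      · intro h
        rw [getD_take' w (j + 1) 0 (by omega) (by omega)]
        exact hh (by omega)
      · intro i hi
        simp only [List.length_take] at hi
        rw [getD_take' w (j + 1) (i + 1) (by omega) (by omega),
          getD_take' w (j + 1) i (by omega) (by omega)]
        exact hc i (by omega)
      · intro i hi
        simp only [List.length_take] at hi
        rw [getD_take' w (j + 1) (i + 1) (by omega) (by omega),
          getD_take' w (j + 1) i (by omega) (by omega)]
        exact hjmin i (by omega)
      · -- w = take (j+1) ++ replicate
        have hc' : (w.take (j + 1)).getD (j + 1 - 1) 0 = w.getD j 0 := by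
          have : j + 1 - 1 = j := by omega
          rw [this, getD_take' w (j + 1) j (by omega) (by omega)]
        simp only [hc']
        refine List.ext_getElem ?_ ?_
        · simp [hlen]; omega
        · intro i h1 h2
          have hin : i < n := by omega
          rw [← List.getD_eq_getElem _ 0, ← List.getD_eq_getElem _ 0]
          rcases Nat.lt_or_ge i (j + 1) with h | h
          · rw [pad_getD_lo _ _ _ _ (by simp [hlen]; omega),
              getD_take' w (j + 1) i (by omega) (by omega)]
          · rw [pad_getD_hi _ _ _ _ (by simp [hlen]; omega) (by simp [hlen]; omega)]
            exact (hconst i (by omega) hin).symm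
    · push_neg at hex
      refine Set.mem_iUnion₂.2 ⟨n, Finset.mem_Icc.2 ⟨hn, le_refl n⟩,
        w, ⟨hlen, ⟨hh, hc⟩, ?_⟩, ?_⟩
      · intro i hi
        rw [hlen] at hi
        exact hex i (by omega)
      · simp
  · intro hw
    obtain ⟨m, hm, v, hv, rfl⟩ := Set.mem_iUnion₂.1 hw
    obtain ⟨hm1, hmn⟩ := Finset.mem_Icc.1 hm
    obtain ⟨hvl, ⟨hvh, hvc⟩, hvs⟩ := hv
    have hwl : (v ++ List.replicate (n - m) (v.getD (m - 1) 0)).length = n := by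
      simp [hvl]; omega
    have hgetlo : ∀ i, i < m →
        (v ++ List.replicate (n - m) (v.getD (m - 1) 0)).getD i 0 = v.getD i 0 :=
      fun i hi => pad_getD_lo v _ _ i (by omega)
    have hgethi : ∀ i, m ≤ i → i < n →
        (v ++ List.replicate (n - m) (v.getD (m - 1) 0)).getD i 0 = v.getD (m - 1) 0 :=
      fun i hi hi2 => pad_getD_hi v _ _ i (by omega) (by omega)
    refine ⟨hwl, ⟨?_, ?_⟩, ?_⟩
    · intro _
      rw [hgetlo 0 (by omega)]
      exact hvh (by omega)
    · intro i hi
      rw [hwl] at hi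
      rcases Nat.lt_or_ge (i + 1) m with h | h
      · rw [hgetlo (i + 1) h, hgetlo i (by omega)]
        exact hvc i (by omega)
      · rw [hgethi (i + 1) h (by omega)]
        rcases Nat.lt_or_ge i m with h2 | h2
        · have : i = m - 1 := by omega
          rw [hgetlo i (by omega), this]
          omega
        · rw [hgethi i h2 (by omega)]
          omega
    · intro i hi
      rw [hwl] at hi
      rcases Nat.lt_or_ge (i + 1) m with h | h
      · intro hcon
        have := hvs i (by omega)
        rw [hgetlo (i + 1) h, hgetlo i (by omega)] at hcon
        exact this (hcon.1.symm)
      · intro hcon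
        have e1 := hgethi (i + 1) h (by omega)
        have e2 := hgethi (i + 2) (by omega) (by omega)
        have := hcon.2
        rw [show i + 1 + 1 = i + 2 from rfl] at this
        rw [e1, e2] at this
        exact this rfl


lemma pad_discr {n m : ℕ} (hm1 : 1 ≤ m) (hmn : m ≤ n) {v : List ℕ} (hv : v ∈ SW m) :
    (∀ i, i + 1 < m →
      (v ++ List.replicate (n - m) (v.getD (m - 1) 0)).getD (i + 1) 0
        ≠ (v ++ List.replicate (n - m) (v.getD (m - 1) 0)).getD i 0) ∧
    (m < n →
      (v ++ List.replicate (n - m) (v.getD (m - 1) 0)).getD m 0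
        = (v ++ List.replicate (n - m) (v.getD (m - 1) 0)).getD (m - 1) 0) := by
  obtain ⟨hvl, _, hvs⟩ := hv
  constructor
  · intro i hi
    rw [pad_getD_lo v _ _ (i + 1) (by omega), pad_getD_lo v _ _ i (by omega)]
    exact hvs i (by omega)
  · intro hmn'
    rw [pad_getD_hi v _ _ m (by omega) (by omega), pad_getD_lo v _ _ (m - 1) (by omega)]

theorem stmt_14 (n : ℕ) (hn : 1 ≤ n) :
    (CW n (· = ·) (· ≠ ·)).ncard = ∑ j ∈ Finset.range n, motzkin j := by
  classical
  rw [CW_decomp n hn]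
  rw [ncard_biUnion (Finset.Icc 1 n) _
    (fun m _ => (SW_finite m).image _) ?_]
  · have : ∀ m ∈ Finset.Icc 1 n,
        ((fun v => v ++ List.replicate (n - m) (v.getD (m - 1) 0)) '' SW m).ncard
          = (SW m).ncard := by
      intro m hm
      obtain ⟨hm1, hmn⟩ := Finset.mem_Icc.1 hm
      refine Set.ncard_image_of_injOn ?_
      intro v1 hv1 v2 hv2 heq
      dsimp only at heq
      have h1 : (v1 ++ List.replicate (n - m) (v1.getD (m - 1) 0)).take m = v1 :=
        List.take_left' hv1.1
      have h2 : (v2 ++ List.replicate (n - m) (v2.getD (m - 1) 0)).take m = v2 :=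
        List.take_left' hv2.1
      rw [← h1, ← h2, heq]
    rw [Finset.sum_congr rfl this]
    rw [show Finset.Icc 1 n = Finset.Ico 1 (n + 1) by rw [Finset.Ico_add_one_right_eq_Icc],
      Finset.sum_Ico_eq_sum_range]
    refine Finset.sum_congr (by norm_num) fun k hk => ?_
    rw [show 1 + k = k + 1 by ring, SW_card_motzkin k]
  · intro i hi j hj hij
    obtain ⟨hi1, hin⟩ := Finset.mem_Icc.1 hi
    obtain ⟨hj1, hjn⟩ := Finset.mem_Icc.1 hj
    rw [Set.disjoint_left]
    rintro w ⟨v1, hv1, rfl⟩ ⟨v2, hv2, heq⟩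
    have d1 := pad_discr (n := n) hi1 hin hv1
    have d2 := pad_discr (n := n) hj1 hjn hv2
    dsimp only at heq d1 d2
    rw [heq] at d2
    rcases Nat.lt_or_ge i j with h | h
    · have hne := d2.1 (i - 1) (by omega)
      have heq2 := d1.2 (by omega)
      rw [show i - 1 + 1 = i by omega] at hne
      exact hne heq2
    · have hlt : j < i := by omega
      have hne := d1.1 (j - 1) (by omega)
      have heq2 := d2.2 (by omega)
      rw [show j - 1 + 1 = j by omega] at hne
      exact hne heq2
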